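/- Define U : ℕ≥1 → ℚ as above, and for k ≥ 1 write k = 2^{p_0} + 2^{p_1} + ⋯ + 2^{p_s} with 0 ≤ p_0 < p_1 < ⋯ < p_s (the binary expansion of k), and set Δ(k) := 2^{-p_0}·k - U(k). Then for all 0 ≤ p_0 < p_1, Δ(2^{p_0} + 2^{p_1}) = 2^{p_0 - p_1}·(2^{p_1 - p_0} - 2)^2. -/

import Mathlib

theorem stmt5 (U : ℕ → ℚ) (h1 : U 1 = 1)
    (heven : ∀ N ≥ 1, U (2 * N) = U N)
    (hodd : ∀ N ≥ 1, U (2 * N + 1) = (1 / 2) * U (N + 1) + 2 * U N + 1 / 2)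
    (Δ : ℕ → ℚ)
    (hΔ : ∀ k ≥ 1, Δ k = (2 : ℚ) ^ (-(padicValNat 2 k : ℤ)) * k - U k)
    (p₀ p₁ : ℕ) (hp : p₀ < p₁) :
    Δ (2 ^ p₀ + 2 ^ p₁) =
      (2 : ℚ) ^ ((p₀ : ℤ) - p₁) * ((2 : ℚ) ^ ((p₁ : ℤ) - p₀) - 2) ^ 2 := by
  -- Lemma A : U (2^p * N) = U N
  have hA : ∀ p N, N ≥ 1 → U (2 ^ p * N) = U N := by
    intro p
    induction p with
    | zero => intro N hN; simp
    | succ p ih =>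
      intro N hN
      have h2 : 2 ^ (p + 1) * N = 2 * (2 ^ p * N) := by ring
      rw [h2, heven _ (Nat.one_le_iff_ne_zero.mpr (by positivity)), ih N hN]
  have hpow1 : ∀ p, U (2 ^ p) = 1 := by
    intro p
    have := hA p 1 le_rfl
    simpa [h1] using this
  -- Lemma B : U (2^m + 1) = 5 - 4 * 2^{-m}
  have hB : ∀ m : ℕ, U (2 ^ m + 1) = 5 - 4 * (2 : ℚ) ^ (-(m : ℤ)) := by
    intro m
    induction m with
    | zero => norm_num [show (2:ℕ)^0 + 1 = 2*1 from rfl, heven 1 le_rfl, h1]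
    | succ m ih =>
      have h2 : 2 ^ (m + 1) + 1 = 2 * 2 ^ m + 1 := by ring
      rw [h2, hodd _ (Nat.one_le_iff_ne_zero.mpr (by positivity)), ih, hpow1]
      have : (2:ℚ) ^ (-((m:ℤ)+1)) = (2:ℚ) ^ (-(m:ℤ)) / 2 := by
        rw [neg_add, zpow_add₀ (by norm_num : (2:ℚ) ≠ 0)]
        norm_num
        ring
      push_cast
      rw [this]
      ring
  set m := p₁ - p₀ with hm
  have hp₁ : p₁ = p₀ + m := by omega
  have hm1 : 1 ≤ m := by omega
  have hk : 2 ^ p₀ + 2 ^ p₁ = 2 ^ p₀ * (1 + 2 ^ m) := by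
    rw [hp₁]; ring
  have hodd' : ¬ (2 ∣ (1 + 2 ^ m)) := by
    obtain ⟨j, hj⟩ : ∃ j, m = j + 1 := ⟨m - 1, by omega⟩
    rw [hj, pow_succ]
    omega
  have hval : padicValNat 2 (2 ^ p₀ + 2 ^ p₁) = p₀ := by
    have : Fact (Nat.Prime 2) := ⟨Nat.prime_two⟩
    rw [hk, padicValNat.mul (by positivity) (by positivity),
      padicValNat.prime_pow, padicValNat.eq_zero_of_not_dvd hodd', add_zero]
  have hU : U (2 ^ p₀ + 2 ^ p₁) = 5 - 4 * (2 : ℚ) ^ (-(m : ℤ)) := by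
    rw [hk, hA p₀ _ (Nat.one_le_iff_ne_zero.mpr (by positivity)), Nat.add_comm, hB]
  rw [hΔ _ (Nat.one_le_iff_ne_zero.mpr (by positivity)), hval, hU, hp₁]
  push_cast
  have h20 : (2:ℚ) ≠ 0 := by norm_num
  rw [show ((p₀:ℤ) - (p₀ + m)) = -(m:ℤ) by ring,
    show ((p₀:ℤ) + m - p₀) = (m:ℤ) by ring]
  rw [zpow_natCast, pow_add]
  field_simp
  have e1 : (2:ℚ) ^ (-(p₀:ℤ)) * 2 ^ p₀ = 1 := by
    rw [zpow_neg, zpow_natCast, inv_mul_cancel₀ (by positivity)]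
  have e2 : (2:ℚ) ^ (-(m:ℤ)) * 2 ^ m = 1 := by
    rw [zpow_neg, zpow_natCast, inv_mul_cancel₀ (by positivity)]
  linear_combination (1 + (2:ℚ) ^ m) * e1 + (4 - (2:ℚ) ^ m) * e2
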